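/- Let M, a, s be positive integers with M > 1 such that ∑_{i=0}^{M-1} (a+i)^2 = s^2. If M = 24·m₁ for a positive integer m₁, then for every integer α ≥ 3 one has m₁ ≢ 3·2^(α-3) (mod 2^(α-1)). -/

import Mathlib

lemma sum6 (a : ℕ) : ∀ n : ℕ, 6 * ∑ i ∈ Finset.range (n+1), (a+i)^2
    = (n+1)*(6*a^2 + 6*a*n + n*(2*n+1)) := by
  intro n
  induction n with
  | zero => simp
  | succ k ih =>
    rw [Finset.sum_range_succ, mul_add, ih]
    ring

lemma key : ∀ e s C : ℕ, C % 4 = 3 → s ^ 2 = 2 ^ e * C → False := by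
  intro e
  induction e using Nat.strong_induction_on with
  | _ e ih =>
    intro s C hC h
    match e with
    | 0 =>
      rw [pow_zero, one_mul] at h
      have h4 : s ^ 2 % 4 = 3 := by rw [h]; exact hC
      rw [Nat.pow_mod] at h4
      have hlt : s % 4 < 4 := Nat.mod_lt _ (by norm_num)
      interval_cases hs : s % 4 <;> simp_all
    | 1 =>
      have h2 : 2 ∣ s := by
        have : 2 ∣ s ^ 2 := ⟨2 ^ 0 * C, by linarith [h]⟩
        exact Nat.Prime.dvd_of_dvd_pow Nat.prime_two this
      obtain ⟨t, rfl⟩ := h2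
      have ht : C = 2 * t ^ 2 := by nlinarith [h]
      set u := t ^ 2
      omega
    | (e+2) =>
      have h2 : 2 ∣ s := by
        have : 2 ∣ s ^ 2 := ⟨2 ^ (e+1) * C, by rw [h]; ring⟩
        exact Nat.Prime.dvd_of_dvd_pow Nat.prime_two this
      obtain ⟨t, rfl⟩ := h2
      have h4 : 4 * t ^ 2 = 4 * (2 ^ e * C) := by
        calc 4 * t ^ 2 = (2 * t) ^ 2 := by ring
          _ = 2 ^ (e + 2) * C := h
          _ = 4 * (2 ^ e * C) := by ring
      have ht : t ^ 2 = 2 ^ e * C := Nat.eq_of_mul_eq_mul_left (by norm_num) h4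
      exact ih e (by omega) t C hC ht

theorem stmt (M a s m₁ : ℕ) (hM : 1 < M) (ha : 1 ≤ a) (hs : 1 ≤ s)
    (hsum : ∑ i ∈ Finset.range M, (a + i) ^ 2 = s ^ 2)
    (hm : 1 ≤ m₁) (hMeq : M = 24 * m₁) :
    ∀ α : ℕ, 3 ≤ α → ¬ m₁ ≡ 3 * 2 ^ (α - 3) [MOD 2 ^ (α - 1)] := by
  intro α hα h
  obtain ⟨γ, rfl⟩ : ∃ γ, α = γ + 3 := ⟨α - 3, by omega⟩
  have hγ3 : (γ + 3) - 3 = γ := by omega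
  have hγ1 : (γ + 3) - 1 = γ + 2 := by omega
  rw [hγ3, hγ1] at h
  -- from h : m₁ ≡ 3 * 2 ^ γ [MOD 2 ^ (γ+2)], get m₁ = 2^γ * (4q+3)
  have hlt : 3 * 2 ^ γ < 2 ^ (γ + 2) := by
    have : 2 ^ (γ + 2) = 4 * 2 ^ γ := by ring
    rw [this]
    have := Nat.pow_pos (n := γ) (show 0 < 2 by norm_num)
    omega
  have hmod : m₁ % 2 ^ (γ + 2) = 3 * 2 ^ γ := by
    have := h
    unfold Nat.ModEq at this
    rw [Nat.mod_eq_of_lt hlt] at this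
    exact this
  obtain ⟨q, hq⟩ : ∃ q, m₁ = 2 ^ γ * (4 * q + 3) := by
    refine ⟨m₁ / 2 ^ (γ + 2), ?_⟩
    set d := m₁ / 2 ^ (γ + 2) with hd0
    have hd := Nat.div_add_mod m₁ (2 ^ (γ + 2))
    have h42 : (2:ℕ) ^ (γ + 2) = 4 * 2 ^ γ := by ring
    rw [hmod, ← hd0] at hd
    rw [h42] at hd
    nlinarith [hd]
  -- set n = M - 1
  obtain ⟨n, hn⟩ : ∃ n, M = n + 1 := ⟨M - 1, by omega⟩
  have hn' : n = 24 * m₁ - 1 := by omega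
  rw [hn] at hsum
  have hsix := sum6 a n
  rw [hsum] at hsix
  -- 6 s² = 24 m₁ B  ⇒ s² = 4 m₁ B
  set B : ℕ := 6*a^2 + 6*a*n + n*(2*n+1) with hB
  have hnM : n + 1 = 24 * m₁ := by omega
  rw [hnM] at hsix
  have hs2 : s ^ 2 = 4 * (m₁ * B) := by
    have : 24 * m₁ * B = 24 * (m₁ * B) := by ring
    rw [this] at hsix
    omega
  -- B % 4 = 1
  have hnodd : Odd n := by
    rw [Nat.odd_iff]; omega
  have heven : Even (a * (a + n)) := by
    rcases Nat.even_or_odd a with he | ho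
    · exact he.mul_right _
    · exact Even.mul_left (ho.add_odd hnodd) a
  obtain ⟨t, ht⟩ := heven
  have hBt : B = 12 * t + n * (2*n+1) := by
    have h1 : a * (a + n) = 2 * t := by omega
    have hax : 6*a^2 + 6*a*n = 12 * t := by
      calc 6*a^2 + 6*a*n = 6 * (a * (a + n)) := by ring
        _ = 6 * (2 * t) := by rw [h1]
        _ = 12 * t := by ring
    rw [hB]
    linarith [hax]
  have hn4 : n % 4 = 3 := by omega
  have hnn4 : n * (2*n+1) % 4 = 1 := by
    rw [Nat.mul_mod, hn4]
    have : (2*n+1) % 4 = 3 := by omega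
    rw [this]
  have hB4 : B % 4 = 1 := by
    set w := n * (2*n+1)
    omega
  -- s² = 2^(γ+2) * ((4q+3) * B)
  have hC4 : ((4 * q + 3) * B) % 4 = 3 := by
    rw [Nat.mul_mod, hB4]
    have : (4 * q + 3) % 4 = 3 := by omega
    rw [this]
  have hfin : s ^ 2 = 2 ^ (γ + 2) * ((4 * q + 3) * B) := by
    rw [hs2, hq]
    ring
  exact key (γ + 2) s ((4 * q + 3) * B) hC4 hfin
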